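/- arXiv:0804.0405 — 2 statements merged into one kernel-verified Lean document; each statement's English description precedes it below -/
import Mathlib

section
/- Let n ≥ 2, let f : ℝ^{n−1} → ℝ be Lipschitz, let L > max{1, Lip(f)}, and let μ ∈ Δ satisfy μ(H_f^− ∪ C_f) = 0. Then for every 0 < p < ∞ there is a constant C, depending only on n, p, L and the growth constant of μ, such that for every μ-measurable function g : ℝⁿ → ℝ̄: ∫ |g|^p dμ ≤ C ∫_{C_f} N(g)^p dH^{n−1}, where N(g)(x) = sup{|g(y)| : y ∈ Γ(x)} is the non-tangential maximal function. -/
open MeasureTheory Metric ENNReal Filter Set Topology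

noncomputable section

/-- Projection of a point of `ℝ^(m+1)` onto its first `m` coordinates. -/
def proj {m : ℕ} (p : EuclideanSpace ℝ (Fin (m + 1))) : EuclideanSpace ℝ (Fin m) :=
  WithLp.toLp 2 (fun i => p i.castSucc)

/-- The graph `C_f` of `f : ℝ^m → ℝ`, as a subset of `ℝ^(m+1)`. -/
def graphSet {m : ℕ} (f : EuclideanSpace ℝ (Fin m) → ℝ) :
    Set (EuclideanSpace ℝ (Fin (m + 1))) :=
  {p | p (Fin.last m) = f (proj p)}

/-- The open region `H_f^-` below the graph of `f`. -/
def lowerSet {m : ℕ} (f : EuclideanSpace ℝ (Fin m) → ℝ) :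
    Set (EuclideanSpace ℝ (Fin (m + 1))) :=
  {p | p (Fin.last m) < f (proj p)}

/-- The cone `Γ((u₀, f u₀)) = {(u,t) : t - f u₀ > 4 L |u - u₀|}`. -/
def cone {m : ℕ} (f : EuclideanSpace ℝ (Fin m) → ℝ) (L : ℝ)
    (u₀ : EuclideanSpace ℝ (Fin m)) : Set (EuclideanSpace ℝ (Fin (m + 1))) :=
  {p | 4 * L * ‖proj p - u₀‖ < p (Fin.last m) - f u₀}

/-- The non-tangential maximal function `N(g)` at the graph point over `u₀`, for an
extended-real-valued `g`. -/
def nontangMax {m : ℕ} (f : EuclideanSpace ℝ (Fin m) → ℝ) (L : ℝ)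
    (g : EuclideanSpace ℝ (Fin (m + 1)) → EReal)
    (u₀ : EuclideanSpace ℝ (Fin m)) : ℝ≥0∞ :=
  ⨆ y ∈ cone f L u₀, (g y).abs

/-! ### Auxiliary geometric lemmas -/

section norms
variable {m : ℕ}

lemma proj_sub (x y : EuclideanSpace ℝ (Fin (m + 1))) : proj (x - y) = proj x - proj y := by
  ext i; simp [proj]

lemma norm_split (x : EuclideanSpace ℝ (Fin (m + 1))) :
    ‖x‖ = Real.sqrt (‖proj x‖ ^ 2 + (x (Fin.last m)) ^ 2) := by
  rw [EuclideanSpace.norm_eq, EuclideanSpace.norm_eq]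
  congr 1
  rw [Real.sq_sqrt (by positivity), Fin.sum_univ_castSucc]
  simp [proj, Real.norm_eq_abs, sq_abs]

lemma norm_proj_le (x : EuclideanSpace ℝ (Fin (m + 1))) : ‖proj x‖ ≤ ‖x‖ := by
  rw [norm_split x]
  calc ‖proj x‖ = Real.sqrt (‖proj x‖ ^ 2) := (Real.sqrt_sq (norm_nonneg _)).symm
  _ ≤ _ := Real.sqrt_le_sqrt (by nlinarith [sq_nonneg (x (Fin.last m))])

lemma norm_le_split (x : EuclideanSpace ℝ (Fin (m + 1))) :
    ‖x‖ ≤ ‖proj x‖ + |x (Fin.last m)| := by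
  rw [norm_split x]
  calc Real.sqrt (‖proj x‖ ^ 2 + (x (Fin.last m)) ^ 2)
      ≤ Real.sqrt ((‖proj x‖ + |x (Fin.last m)|) ^ 2) := by
        apply Real.sqrt_le_sqrt
        nlinarith [norm_nonneg (proj x), abs_nonneg (x (Fin.last m)), sq_abs (x (Fin.last m)),
          mul_nonneg (norm_nonneg (proj x)) (abs_nonneg (x (Fin.last m)))]
  _ = ‖proj x‖ + |x (Fin.last m)| := Real.sqrt_sq (by positivity)

lemma lipschitz_proj : LipschitzWith 1 (proj (m := m)) := by
  apply LipschitzWith.of_dist_le_mul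
  intro x y
  rw [dist_eq_norm, dist_eq_norm, ← proj_sub]
  simpa using norm_proj_le (x - y)

/-- graph point over `u`. -/
def gp (f : EuclideanSpace ℝ (Fin m) → ℝ) (u : EuclideanSpace ℝ (Fin m)) :
    EuclideanSpace ℝ (Fin (m + 1)) :=
  WithLp.toLp 2 (Fin.snoc (α := fun _ => ℝ) u.ofLp (f u))

lemma proj_gp (f : EuclideanSpace ℝ (Fin m) → ℝ) (u : EuclideanSpace ℝ (Fin m)) :
    proj (gp f u) = u := by
  ext i; simp [proj, gp, Fin.snoc_castSucc]

lemma gp_last (f : EuclideanSpace ℝ (Fin m) → ℝ) (u : EuclideanSpace ℝ (Fin m)) :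
    (gp f u) (Fin.last m) = f u := by simp [gp, Fin.snoc_last]

lemma gp_mem (f : EuclideanSpace ℝ (Fin m) → ℝ) (u : EuclideanSpace ℝ (Fin m)) :
    gp f u ∈ graphSet f := by
  show (gp f u) (Fin.last m) = f (proj (gp f u))
  rw [proj_gp, gp_last]

/-- Membership in the cone over points of a small ball. -/
lemma mem_cone_of {f : EuclideanSpace ℝ (Fin m) → ℝ} {Lf : NNReal}
    (hf : LipschitzWith Lf f) {L : ℝ} (hLf : (Lf : ℝ) ≤ L) (hL0 : 0 < L)
    (x : EuclideanSpace ℝ (Fin (m + 1))) (u₀ : EuclideanSpace ℝ (Fin m))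
    (hfx : f (proj x) < x (Fin.last m))
    (hu : ‖u₀ - proj x‖ < (x (Fin.last m) - f (proj x)) / (5 * L)) :
    x ∈ cone f L u₀ := by
  set d := ‖proj x - u₀‖ with hd
  have hdd : ‖u₀ - proj x‖ = d := norm_sub_rev _ _
  rw [hdd] at hu
  have h5 : 5 * L * d < x (Fin.last m) - f (proj x) := by
    have := (lt_div_iff₀ (by linarith : (0:ℝ) < 5 * L)).mp hu
    linarith
  have hfu : f u₀ - f (proj x) ≤ (Lf : ℝ) * d := by
    have h1 := hf.dist_le_mul u₀ (proj x)
    rw [Real.dist_eq, dist_eq_norm, hdd] at h1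
    exact (le_abs_self _).trans h1
  have hLfd : (Lf : ℝ) * d ≤ L * d := mul_le_mul_of_nonneg_right hLf (norm_nonneg _)
  show 4 * L * ‖proj x - u₀‖ < x (Fin.last m) - f u₀
  rw [← hd]
  linarith

end norms

/-! ### Layer cake for `ℝ≥0∞`-valued functions -/

lemma slice_eq (c : ℝ≥0∞) :
    {t : ℝ | 0 < t ∧ ENNReal.ofReal t < c} =
      (if c = ∞ then Set.Ioi 0 else Set.Ioo 0 c.toReal) := by
  split_ifs with hc
  · subst hc; ext t; simp [ENNReal.ofReal_lt_top]
  · ext t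
    simp only [Set.mem_setOf_eq, Set.mem_Ioo, and_congr_right_iff]
    intro ht
    rw [ENNReal.ofReal_lt_iff_lt_toReal ht.le hc]

lemma slice_meas (c : ℝ≥0∞) : MeasurableSet {t : ℝ | 0 < t ∧ ENNReal.ofReal t < c} := by
  rw [slice_eq]
  split_ifs
  · exact measurableSet_Ioi
  · exact measurableSet_Ioo

lemma slice_vol (c : ℝ≥0∞) : volume {t : ℝ | 0 < t ∧ ENNReal.ofReal t < c} = c := by
  rw [slice_eq]
  split_ifs with hc
  · rw [Real.volume_Ioi, hc]
  · rw [Real.volume_Ioo, sub_zero, ENNReal.ofReal_toReal hc]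

lemma lem_layercake {α : Type*} [MeasurableSpace α] (ν : Measure α) [SFinite ν]
    {h : α → ℝ≥0∞} (hme : AEMeasurable h ν) :
    ∫⁻ x, h x ∂ν = ∫⁻ t : ℝ, ν {x | 0 < t ∧ ENNReal.ofReal t < h x} := by
  obtain ⟨h', h'm, hae⟩ := hme
  have hsets : ∀ t : ℝ,
      ν {x | 0 < t ∧ ENNReal.ofReal t < h x} = ν {x | 0 < t ∧ ENNReal.ofReal t < h' x} := by
    intro t
    apply measure_congr
    filter_upwards [hae] with x hx
    change (0 < t ∧ ENNReal.ofReal t < h x) = (0 < t ∧ ENNReal.ofReal t < h' x)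
    rw [hx]
  have hS : MeasurableSet {q : α × ℝ | 0 < q.2 ∧ ENNReal.ofReal q.2 < h' q.1} := by
    have h1 : MeasurableSet {q : α × ℝ | 0 < q.2} := measurable_snd measurableSet_Ioi
    have h2 : MeasurableSet {q : α × ℝ | ENNReal.ofReal q.2 < h' q.1} :=
      measurableSet_lt (ENNReal.measurable_ofReal.comp measurable_snd) (h'm.comp measurable_fst)
    exact h1.inter h2
  have hslice : ∀ t : ℝ, MeasurableSet {x : α | 0 < t ∧ ENNReal.ofReal t < h' x} := by
    intro t
    by_cases ht : 0 < t
    · simp only [ht, true_and]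
      exact h'm measurableSet_Ioi
    · simp only [ht, false_and]
      exact MeasurableSet.empty
  set S : Set (α × ℝ) := {q : α × ℝ | 0 < q.2 ∧ ENNReal.ofReal q.2 < h' q.1} with hSdef
  calc ∫⁻ x, h x ∂ν = ∫⁻ x, h' x ∂ν := lintegral_congr_ae hae
  _ = ∫⁻ x, ∫⁻ t : ℝ, S.indicator 1 (x, t) ∂volume ∂ν := by
      refine lintegral_congr fun x => ?_
      calc h' x = volume {t : ℝ | 0 < t ∧ ENNReal.ofReal t < h' x} := (slice_vol _).symm
      _ = ∫⁻ t : ℝ, ({t : ℝ | 0 < t ∧ ENNReal.ofReal t < h' x}).indicator 1 t ∂volume :=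
          (lintegral_indicator_one (slice_meas _)).symm
      _ = ∫⁻ t : ℝ, S.indicator 1 (x, t) ∂volume := by
          refine lintegral_congr fun t => ?_
          simp only [Set.indicator_apply, Set.mem_setOf_eq, hSdef, Pi.one_apply]
  _ = ∫⁻ t : ℝ, ∫⁻ x, S.indicator 1 (x, t) ∂ν ∂volume := by
      apply lintegral_lintegral_swap
      exact ((measurable_one.indicator hS).aemeasurable)
  _ = ∫⁻ t : ℝ, ν {x | 0 < t ∧ ENNReal.ofReal t < h' x} := by
      refine lintegral_congr fun t => ?_
      calc ∫⁻ x, S.indicator 1 (x, t) ∂ν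
          = ∫⁻ x, ({x : α | 0 < t ∧ ENNReal.ofReal t < h' x}).indicator 1 x ∂ν := by
            refine lintegral_congr fun x => ?_
            simp only [Set.indicator_apply, Set.mem_setOf_eq, hSdef, Pi.one_apply]
      _ = ν {x | 0 < t ∧ ENNReal.ofReal t < h' x} := lintegral_indicator_one (hslice t)
  _ = _ := lintegral_congr fun t => (hsets t).symm

/-! ### Comparison of Lebesgue and Hausdorff measures -/

lemma lem_vol_le_H {m : ℕ} (s : Set (EuclideanSpace ℝ (Fin m))) (hs : MeasurableSet s) :
    volume s ≤ μH[(m : ℝ)] s := by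
  classical
  set e := (MeasurableEquiv.toLp 2 (Fin m → ℝ)).symm with he
  have h1 : volume s = volume (e '' s) := by
    rw [MeasurableEquiv.image_eq_preimage_symm]
    exact ((MeasurePreserving.symm _
      (EuclideanSpace.volume_preserving_symm_measurableEquiv_toLp (Fin m))).measure_preimage
      hs.nullMeasurableSet).symm
  have h2 : (volume : Measure (Fin m → ℝ)) (e '' s) = μH[(m : ℝ)] (e '' s) := by
    have := (hausdorffMeasure_pi_real (ι := Fin m)).symm
    rw [Fintype.card_fin] at this
    rw [this]
  have h3 : μH[(m : ℝ)] (e '' s) ≤ μH[(m : ℝ)] s := by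
    have hl : LipschitzWith 1 (⇑e) := by
      rw [he]
      exact PiLp.lipschitzWith_ofLp 2 _
    have := hl.hausdorffMeasure_image_le (d := (m : ℝ)) (by positivity) s
    simpa using this
  rw [h1, h2]
  exact h3

lemma lem_H_le_graph {m : ℕ} (f : EuclideanSpace ℝ (Fin m) → ℝ)
    (s : Set (EuclideanSpace ℝ (Fin m))) :
    μH[(m : ℝ)] s ≤ μH[(m : ℝ)] (proj ⁻¹' s ∩ graphSet f) := by
  have h0 : s = proj '' (gp f '' s) := by
    ext u
    constructor
    · intro hu; exact ⟨gp f u, ⟨u, hu, rfl⟩, proj_gp f u⟩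
    · rintro ⟨y, ⟨v, hv, rfl⟩, rfl⟩
      rwa [proj_gp]
  calc μH[(m : ℝ)] s = μH[(m : ℝ)] (proj '' (gp f '' s)) := by rw [← h0]
  _ ≤ μH[(m : ℝ)] (gp f '' s) := by
      have := lipschitz_proj.hausdorffMeasure_image_le (d := (m : ℝ)) (by positivity) (gp f '' s)
      simpa using this
  _ ≤ μH[(m : ℝ)] (proj ⁻¹' s ∩ graphSet f) := by
      apply measure_mono
      rintro y ⟨v, hv, rfl⟩
      exact ⟨by rw [Set.mem_preimage, proj_gp]; exact hv, gp_mem f v⟩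

/-! ### The tent (Carleson) bound -/

lemma tent_bound {m : ℕ} (hm : 1 ≤ m) (f : EuclideanSpace ℝ (Fin m) → ℝ) (Lf : NNReal)
    (hf : LipschitzWith Lf f) (L : ℝ) (hL : max 1 (Lf : ℝ) < L)
    (μ : Measure (EuclideanSpace ℝ (Fin (m + 1)))) (Cμ : ℝ) (hCμ : 0 < Cμ)
    (hμΔ : ∀ (x : EuclideanSpace ℝ (Fin (m + 1))) (r : ℝ), 0 < r →
      μ (closedBall x r) ≤ ENNReal.ofReal (Cμ * r ^ m))
    (F : Set (EuclideanSpace ℝ (Fin m))) :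
    μ {x | f (proj x) < x (Fin.last m) ∧
        ball (proj x) ((x (Fin.last m) - f (proj x)) / (5 * L)) ⊆ F} ≤
      (ENNReal.ofReal (Cμ * (60 * L) ^ m) / volume (ball (0 : EuclideanSpace ℝ (Fin m)) 1))
        * volume F := by
  have hL1 : (1 : ℝ) < L := lt_of_le_of_lt (le_max_left _ _) hL
  have hLf : (Lf : ℝ) < L := lt_of_le_of_lt (le_max_right _ _) hL
  have hL0 : (0 : ℝ) < L := lt_trans one_pos hL1
  haveI : Nontrivial (EuclideanSpace ℝ (Fin m)) := by
    refine ⟨EuclideanSpace.single ⟨0, hm⟩ (1 : ℝ), 0, ?_⟩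
    intro hcontra
    have := congrArg (fun v => ‖v‖) hcontra
    simp [EuclideanSpace.norm_single] at this
  set v₁ := volume (ball (0 : EuclideanSpace ℝ (Fin m)) 1) with hv₁
  have hv₁0 : v₁ ≠ 0 := (measure_ball_pos volume 0 one_pos).ne'
  have hv₁top : v₁ ≠ ∞ := measure_ball_lt_top.ne
  set A := ENNReal.ofReal (Cμ * (60 * L) ^ m) with hA
  have hA0 : A ≠ 0 := by
    rw [hA]
    simp only [ne_eq, ENNReal.ofReal_eq_zero, not_le]
    positivity
  set T := {x : EuclideanSpace ℝ (Fin (m + 1)) | f (proj x) < x (Fin.last m) ∧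
      ball (proj x) ((x (Fin.last m) - f (proj x)) / (5 * L)) ⊆ F} with hT
  set r : EuclideanSpace ℝ (Fin (m + 1)) → ℝ :=
    fun x => (x (Fin.last m) - f (proj x)) / (5 * L) with hr
  have hrpos : ∀ x ∈ T, 0 < r x := by
    intro x hx
    exact div_pos (sub_pos.mpr hx.1) (by linarith)
  have hball : ∀ (c : EuclideanSpace ℝ (Fin m)) (ρ : ℝ), 0 ≤ ρ →
      volume (ball c ρ) = ENNReal.ofReal (ρ ^ m) * v₁ := by
    intro c ρ hρ
    rw [hv₁, Measure.addHaar_ball volume c hρ, finrank_euclideanSpace_fin]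
  rcases eq_or_ne (volume F) ∞ with hFvol | hFvol
  · rw [hFvol, ENNReal.mul_top (by
      intro hdiv
      exact hA0 ((ENNReal.div_eq_zero_iff.mp hdiv).resolve_right hv₁top))]
    exact le_top
  have hrR : ∀ x ∈ T, r x ≤ ((volume F / v₁).toReal) ^ (1 / (m : ℝ)) := by
    intro x hx
    have h1 : volume (ball (proj x) (r x)) ≤ volume F := measure_mono hx.2
    rw [hball _ _ (hrpos x hx).le] at h1
    have h2 : ENNReal.ofReal (r x ^ m) ≤ volume F / v₁ :=
      (ENNReal.le_div_iff_mul_le (Or.inl hv₁0) (Or.inl hv₁top)).mpr h1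
    have h3 : r x ^ m ≤ (volume F / v₁).toReal := by
      rw [← ENNReal.ofReal_le_iff_le_toReal (ENNReal.div_lt_top hFvol hv₁0).ne] at *
      exact h2
    have hm0 : (m : ℝ) ≠ 0 := Nat.cast_ne_zero.mpr (by omega)
    calc r x = ((r x) ^ m) ^ (1 / (m : ℝ)) := by
          rw [← Real.rpow_natCast (r x) m, ← Real.rpow_mul (hrpos x hx).le,
            mul_one_div_cancel hm0, Real.rpow_one]
    _ ≤ ((volume F / v₁).toReal) ^ (1 / (m : ℝ)) := by
          apply Real.rpow_le_rpow (pow_nonneg (hrpos x hx).le m) h3 (by positivity)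
  obtain ⟨u, huT, hdisj, hcov⟩ :=
    Vitali.exists_disjoint_subfamily_covering_enlargement_closedBall T proj r
      (((volume F / v₁).toReal) ^ (1 / (m : ℝ))) hrR 5 (by norm_num)
  have hrpos' : ∀ b ∈ u, 0 < r b := fun b hb => hrpos b (huT hb)
  have hcount : u.Countable := by
    apply hdisj.countable_of_nonempty_interior
    intro b hb
    exact ⟨proj b, ball_subset_interior_closedBall (mem_ball_self (hrpos' b hb))⟩
  have hTsub : T ⊆ ⋃ b ∈ u, closedBall (gp f (proj b)) (60 * L * r b) := by
    intro a ha
    obtain ⟨b, hbu, hsub⟩ := hcov a ha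
    have hrb0 : 0 ≤ r b := (hrpos' b hbu).le
    have h1 : dist (proj a) (proj b) ≤ 5 * r b :=
      hsub (mem_closedBall_self (hrpos a ha).le)
    have h2 : r a ≤ 10 * r b := by
      set y := proj a + EuclideanSpace.single (⟨0, hm⟩ : Fin m) (r a) with hy
      have hyd : dist y (proj a) = r a := by
        rw [dist_eq_norm, hy, add_sub_cancel_left, EuclideanSpace.norm_single,
          Real.norm_eq_abs, abs_of_nonneg (hrpos a ha).le]
      have hymem : y ∈ closedBall (proj a) (r a) := by
        rw [mem_closedBall, hyd]
      have := hsub hymem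
      rw [mem_closedBall] at this
      calc r a = dist y (proj a) := hyd.symm
      _ ≤ dist y (proj b) + dist (proj b) (proj a) := dist_triangle _ _ _
      _ ≤ 5 * r b + 5 * r b := by
          refine add_le_add this ?_
          rw [dist_comm]; exact h1
      _ = 10 * r b := by ring
    have hra : a (Fin.last m) - f (proj a) = 5 * L * r a := by
      rw [hr]
      field_simp
    have hfd : |f (proj a) - f (proj b)| ≤ L * (5 * r b) := by
      have := hf.dist_le_mul (proj a) (proj b)
      rw [Real.dist_eq] at this
      calc |f (proj a) - f (proj b)| ≤ (Lf : ℝ) * dist (proj a) (proj b) := this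
      _ ≤ L * (5 * r b) := by
          apply mul_le_mul hLf.le h1 dist_nonneg hL0.le
    have hheight : |a (Fin.last m) - f (proj b)| ≤ 55 * L * r b := by
      have e1 : a (Fin.last m) - f (proj b) =
          (a (Fin.last m) - f (proj a)) + (f (proj a) - f (proj b)) := by ring
      rw [e1]
      calc |(a (Fin.last m) - f (proj a)) + (f (proj a) - f (proj b))|
          ≤ |a (Fin.last m) - f (proj a)| + |f (proj a) - f (proj b)| := abs_add_le _ _
      _ ≤ 5 * L * r a + L * (5 * r b) := by
          refine add_le_add ?_ hfd
          rw [hra, abs_of_nonneg (mul_nonneg (by positivity) (hrpos a ha).le)]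
      _ ≤ 5 * L * (10 * r b) + L * (5 * r b) := by
          refine add_le_add ?_ le_rfl
          have : (0:ℝ) < 5 * L := by linarith
          nlinarith
      _ = 55 * L * r b := by ring
    refine Set.mem_biUnion hbu ?_
    rw [mem_closedBall, dist_eq_norm]
    calc ‖a - gp f (proj b)‖
        ≤ ‖proj (a - gp f (proj b))‖ + |(a - gp f (proj b)) (Fin.last m)| := norm_le_split _
    _ = ‖proj a - proj b‖ + |a (Fin.last m) - f (proj b)| := by
        rw [proj_sub, proj_gp]
        congr 2
        show a (Fin.last m) - (gp f (proj b)) (Fin.last m) = a (Fin.last m) - f (proj b)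
        rw [gp_last]
    _ ≤ 5 * r b + 55 * L * r b := by
        refine add_le_add ?_ hheight
        rw [← dist_eq_norm]; exact h1
    _ ≤ 60 * L * r b := by nlinarith
  calc μ T ≤ μ (⋃ b ∈ u, closedBall (gp f (proj b)) (60 * L * r b)) := measure_mono hTsub
  _ ≤ ∑' b : u, μ (closedBall (gp f (proj b)) (60 * L * r b)) := measure_biUnion_le μ hcount _
  _ ≤ ∑' b : u, A * ENNReal.ofReal (r b ^ m) := by
      apply ENNReal.tsum_le_tsum
      intro b
      have hrb : (0:ℝ) < 60 * L * r b := by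
        have := hrpos' b b.2
        positivity
      calc μ (closedBall (gp f (proj ↑b)) (60 * L * r ↑b))
          ≤ ENNReal.ofReal (Cμ * (60 * L * r ↑b) ^ m) := hμΔ _ _ hrb
      _ = A * ENNReal.ofReal (r ↑b ^ m) := by
          rw [hA, ← ENNReal.ofReal_mul (by positivity)]
          congr 1
          rw [mul_pow]
          ring
  _ = A * ∑' b : u, ENNReal.ofReal (r b ^ m) := ENNReal.tsum_mul_left
  _ ≤ A * (volume F / v₁) := by
      apply mul_le_mul_right
      have hkey : (∑' b : u, ENNReal.ofReal (r b ^ m)) * v₁ ≤ volume F := by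
        calc (∑' b : u, ENNReal.ofReal (r b ^ m)) * v₁
            = ∑' b : u, ENNReal.ofReal (r b ^ m) * v₁ := ENNReal.tsum_mul_right.symm
        _ = ∑' b : u, volume (ball (proj (b : EuclideanSpace ℝ (Fin (m+1)))) (r b)) := by
            congr 1
            funext b
            rw [hball _ _ (hrpos' b b.2).le]
        _ = volume (⋃ b ∈ u, ball (proj b) (r b)) := by
            refine (measure_biUnion hcount ?_ fun b _ => measurableSet_ball).symm
            exact hdisj.mono fun b => ball_subset_closedBall
        _ ≤ volume F := by
            apply measure_mono
            refine Set.iUnion₂_subset fun b hb => ?_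
            exact (huT hb).2
      exact (ENNReal.le_div_iff_mul_le (Or.inl hv₁0) (Or.inl hv₁top)).mpr hkey
  _ = A / v₁ * volume F := by
      rw [div_eq_mul_inv, div_eq_mul_inv]
      ring

/-! ### Openness of superlevel sets of the non-tangential maximal function -/

lemma isOpen_superlevel {m : ℕ} (f : EuclideanSpace ℝ (Fin m) → ℝ) (hfc : Continuous f)
    (L : ℝ) (g : EuclideanSpace ℝ (Fin (m + 1)) → EReal) (c : ℝ≥0∞) :
    IsOpen {u : EuclideanSpace ℝ (Fin m) | c < nontangMax f L g u} := by
  rw [isOpen_iff_forall_mem_open]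
  intro u₀ hu₀
  have h : c < ⨆ y ∈ cone f L u₀, (g y).abs := hu₀
  rw [lt_iSup_iff] at h
  obtain ⟨y, hy⟩ := h
  rw [lt_iSup_iff] at hy
  obtain ⟨hyc, hgy⟩ := hy
  refine ⟨{u | 4 * L * ‖proj y - u‖ < y (Fin.last m) - f u}, ?_, ?_, hyc⟩
  · intro u hu
    exact lt_of_lt_of_le hgy (le_biSup (fun y => (g y).abs) hu)
  · apply isOpen_lt
    · exact continuous_const.mul ((continuous_const.sub continuous_id).norm)
    · exact continuous_const.sub hfc

/-- Carleson measure estimate. If `f` is Lipschitz, `L > max{1, Lip f}` and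
`μ ∈ Δ` vanishes on `H_f^- ∪ C_f`, then for every `0 < p < ∞` there is `C < ∞` with
`∫ |g|^p dμ ≤ C ∫_{C_f} N(g)^p dH^{n-1}` for every `μ`-measurable `g : ℝⁿ → ℝ̄`. -/
theorem statement8 (m : ℕ) (hm : 1 ≤ m)
    (f : EuclideanSpace ℝ (Fin m) → ℝ) (Lf : NNReal) (hf : LipschitzWith Lf f)
    (L : ℝ) (hL : max 1 (Lf : ℝ) < L)
    (μ : Measure (EuclideanSpace ℝ (Fin (m + 1)))) [IsFiniteMeasure μ]
    (Cμ : ℝ)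
    (hμΔ : ∀ (x : EuclideanSpace ℝ (Fin (m + 1))) (r : ℝ), 0 < r →
      μ (closedBall x r) ≤ ENNReal.ofReal (Cμ * r ^ m))
    (hμside : μ (lowerSet f ∪ graphSet f) = 0)
    (p : ℝ) (hp : 0 < p) :
    ∃ C : ℝ≥0∞, C ≠ ∞ ∧
      ∀ g : EuclideanSpace ℝ (Fin (m + 1)) → EReal, AEMeasurable g μ →
        ∫⁻ x, (g x).abs ^ p ∂μ ≤
          C * ∫⁻ x in graphSet f, (nontangMax f L g (proj x)) ^ p ∂(μH[(m : ℝ)]) := by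
  have hL1 : (1 : ℝ) < L := lt_of_le_of_lt (le_max_left _ _) hL
  have hLf : (Lf : ℝ) < L := lt_of_le_of_lt (le_max_right _ _) hL
  have hL0 : (0 : ℝ) < L := lt_trans one_pos hL1
  -- degenerate case: `Cμ ≤ 0` forces `μ = 0`
  by_cases hCμ0 : Cμ ≤ 0
  · have hμ0 : μ = 0 := by
      apply Measure.measure_univ_eq_zero.mp
      have hcover : (Set.univ : Set (EuclideanSpace ℝ (Fin (m + 1)))) ⊆
          ⋃ n : ℕ, closedBall 0 ((n : ℝ) + 1) := by
        intro x _
        refine Set.mem_iUnion.mpr ⟨⌈‖x‖⌉₊, ?_⟩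
        rw [mem_closedBall, dist_zero_right]
        have := Nat.le_ceil ‖x‖
        linarith
      have hzero : ∀ n : ℕ, μ (closedBall (0 : EuclideanSpace ℝ (Fin (m + 1))) ((n : ℝ) + 1)) = 0 := by
        intro n
        have h1 := hμΔ 0 ((n : ℝ) + 1) (by positivity)
        have h0 : ENNReal.ofReal (Cμ * ((n : ℝ) + 1) ^ m) = 0 := by
          rw [ENNReal.ofReal_eq_zero]
          have hpow : (0:ℝ) ≤ ((n : ℝ) + 1) ^ m := by positivity
          nlinarith
        rw [h0] at h1
        exact le_antisymm h1 zero_le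
      have h2 : μ Set.univ ≤ ∑' n : ℕ, μ (closedBall (0:EuclideanSpace ℝ (Fin (m+1))) ((n : ℝ) + 1)) :=
        (measure_mono hcover).trans (measure_iUnion_le _)
      simp only [hzero, tsum_zero] at h2
      exact le_antisymm h2 zero_le
    refine ⟨1, one_ne_top, fun g hg => ?_⟩
    simp [hμ0]
  push_neg at hCμ0
  -- main case
  haveI : Nontrivial (EuclideanSpace ℝ (Fin m)) := by
    refine ⟨EuclideanSpace.single ⟨0, hm⟩ (1 : ℝ), 0, ?_⟩
    intro hcontra
    have := congrArg (fun v => ‖v‖) hcontra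
    simp [EuclideanSpace.norm_single] at this
  set v₁ := volume (ball (0 : EuclideanSpace ℝ (Fin m)) 1) with hv₁
  have hv₁0 : v₁ ≠ 0 := (measure_ball_pos volume 0 one_pos).ne'
  set C := ENNReal.ofReal (Cμ * (60 * L) ^ m) / v₁ with hC
  have hCne : C ≠ ∞ := (ENNReal.div_lt_top ENNReal.ofReal_ne_top hv₁0).ne
  refine ⟨C, hCne, fun g hg => ?_⟩
  set N := nontangMax f L g with hN
  -- measurability facts
  have habs : Measurable (EReal.abs) := by
    apply EReal.measurable_of_measurable_real
    simp only [EReal.abs_def]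
    exact ENNReal.measurable_ofReal.comp continuous_abs.measurable
  have habs' : AEMeasurable (fun x => (g x).abs) μ := habs.comp_aemeasurable hg
  have hgp_meas : AEMeasurable (fun x => (g x).abs ^ p) μ :=
    ((ENNReal.continuous_rpow_const (y := p)).measurable).comp_aemeasurable habs'
  have hNopen : ∀ c : ℝ≥0∞, IsOpen {u : EuclideanSpace ℝ (Fin m) | c < N u} :=
    fun c => isOpen_superlevel f hf.continuous L g c
  have hNm : Measurable N := measurable_of_Ioi fun c => (hNopen c).measurableSet
  have hN2 : Measurable fun u => N u ^ p :=
    (ENNReal.continuous_rpow_const (y := p)).measurable.comp hNm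
  have hproj_m : Measurable (proj (m := m)) := lipschitz_proj.continuous.measurable
  -- distribution inequality
  have key : ∀ t : ℝ, μ {x | 0 < t ∧ ENNReal.ofReal t < (g x).abs ^ p}
      ≤ C * volume {u | 0 < t ∧ ENNReal.ofReal t < N u ^ p} := by
    intro t
    by_cases ht : 0 < t
    · simp only [ht, true_and]
      set c := ENNReal.ofReal t with hc
      set lam := c ^ p⁻¹ with hlam
      have hrw : ∀ a : ℝ≥0∞, (c < a ^ p) ↔ (lam < a) := by
        intro a
        rw [hlam]
        exact (ENNReal.rpow_inv_lt_iff hp).symm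
      have hset1 : {x | c < (g x).abs ^ p} = {x | lam < (g x).abs} := by
        ext x; exact hrw _
      have hset2 : {u | c < N u ^ p} = {u | lam < N u} := by
        ext u; exact hrw _
      rw [hset1, hset2]
      set F := {u : EuclideanSpace ℝ (Fin m) | lam < N u} with hF
      have hincl : {x | lam < (g x).abs} ⊆
          {x : EuclideanSpace ℝ (Fin (m + 1)) | f (proj x) < x (Fin.last m) ∧
            ball (proj x) ((x (Fin.last m) - f (proj x)) / (5 * L)) ⊆ F}
          ∪ (lowerSet f ∪ graphSet f) := by
        intro x hx
        by_cases hxS : x ∈ lowerSet f ∪ graphSet f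
        · exact Or.inr hxS
        · left
          have h1 : ¬ (x (Fin.last m) < f (proj x)) := fun h => hxS (Or.inl h)
          have h2 : x (Fin.last m) ≠ f (proj x) := fun h => hxS (Or.inr h)
          have hfx : f (proj x) < x (Fin.last m) := (not_lt.mp h1).lt_of_ne (Ne.symm h2)
          refine ⟨hfx, ?_⟩
          intro u₀ hu₀
          rw [mem_ball, dist_eq_norm] at hu₀
          have hcone : x ∈ cone f L u₀ := mem_cone_of hf hLf.le hL0 x u₀ hfx hu₀
          have : (g x).abs ≤ N u₀ := le_biSup (fun y => (g y).abs) hcone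
          exact lt_of_lt_of_le hx this
      calc μ {x | lam < (g x).abs}
          ≤ μ ({x : EuclideanSpace ℝ (Fin (m + 1)) | f (proj x) < x (Fin.last m) ∧
              ball (proj x) ((x (Fin.last m) - f (proj x)) / (5 * L)) ⊆ F}
              ∪ (lowerSet f ∪ graphSet f)) := measure_mono hincl
      _ ≤ μ {x : EuclideanSpace ℝ (Fin (m + 1)) | f (proj x) < x (Fin.last m) ∧
              ball (proj x) ((x (Fin.last m) - f (proj x)) / (5 * L)) ⊆ F}
            + μ (lowerSet f ∪ graphSet f) := measure_union_le _ _
      _ = μ {x : EuclideanSpace ℝ (Fin (m + 1)) | f (proj x) < x (Fin.last m) ∧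
              ball (proj x) ((x (Fin.last m) - f (proj x)) / (5 * L)) ⊆ F} := by
            rw [hμside, add_zero]
      _ ≤ C * volume F := by
            rw [hC, hv₁]
            exact tent_bound hm f Lf hf L hL μ Cμ hCμ0 hμΔ F
    · simp only [ht, false_and, Set.setOf_false, measure_empty]
      exact zero_le
  -- chain of inequalities
  calc ∫⁻ x, (g x).abs ^ p ∂μ
      = ∫⁻ t : ℝ, μ {x | 0 < t ∧ ENNReal.ofReal t < (g x).abs ^ p} := lem_layercake μ hgp_meas
  _ ≤ ∫⁻ t : ℝ, C * volume {u | 0 < t ∧ ENNReal.ofReal t < N u ^ p} := lintegral_mono key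
  _ = C * ∫⁻ t : ℝ, volume {u | 0 < t ∧ ENNReal.ofReal t < N u ^ p} :=
      lintegral_const_mul' C _ hCne
  _ = C * ∫⁻ u, N u ^ p ∂(volume : Measure (EuclideanSpace ℝ (Fin m))) := by
      rw [← lem_layercake volume hN2.aemeasurable]
  _ ≤ C * ∫⁻ x in graphSet f, (N (proj x)) ^ p ∂(μH[(m : ℝ)]) := by
      apply mul_le_mul_right
      have hmap : ∫⁻ x in graphSet f, (N (proj x)) ^ p ∂(μH[(m : ℝ)]) =
          ∫⁻ u, N u ^ p ∂(Measure.map proj ((μH[(m : ℝ)]).restrict (graphSet f))) :=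
        (lintegral_map hN2 hproj_m).symm
      rw [hmap]
      refine lintegral_mono' ?_ le_rfl
      refine Measure.le_iff.mpr fun s hs => ?_
      rw [Measure.map_apply hproj_m hs, Measure.restrict_apply (hproj_m hs)]
      exact (lem_vol_le_H s hs).trans (lem_H_le_graph f s)
end
end

section
/- Let n ≥ 2, K ∈ 𝒦 with constant C₁ in the gradient bound, let ν be a finite Radon measure on ℝⁿ, let g ∈ L¹(ν), and let x, y ∈ ℝⁿ with r = |x − y| > 0. Then ∫_{ℝⁿ∖B(x,2r)} |K(x−z) − K(y−z)| |g(z)| dν(z) ≤ 4ⁿ C₁ M_ν g(x), where M_ν g(x) = sup_{ρ>0} ρ^{1−n} ∫_{B(x,ρ)} |g| dν. -/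
open MeasureTheory Metric ENNReal Filter Set Topology

noncomputable section

/-- The maximal function `M_ν g(x) = sup_{ρ>0} ρ^{1-n} ∫_{B(x,ρ)} |g| dν`. -/
def radialMax {n : ℕ} (ν : Measure (EuclideanSpace ℝ (Fin n)))
    (g : EuclideanSpace ℝ (Fin n) → ℝ) (x : EuclideanSpace ℝ (Fin n)) : ℝ≥0∞ :=
  ⨆ (ρ : ℝ) (_ : 0 < ρ),
    ENNReal.ofReal (ρ ^ (1 - (n : ℝ))) * ∫⁻ y in closedBall x ρ, ENNReal.ofReal |g y| ∂ν


lemma mvt_bound {n : ℕ} {K : EuclideanSpace ℝ (Fin n) → ℝ} {C₁ : ℝ}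
    (hK_diff : ContDiffOn ℝ 1 K {0}ᶜ)
    (hK_grad : ∀ x : EuclideanSpace ℝ (Fin n), x ≠ 0 →
      ‖fderiv ℝ K x‖ ≤ C₁ * ‖x‖ ^ (-(n : ℝ)))
    (hC₁ : 0 ≤ C₁)
    {x y z : EuclideanSpace ℝ (Fin n)} (h : 2 * ‖x - y‖ < dist z x) (hr : 0 < ‖x - y‖) :
    |K (x - z) - K (y - z)| ≤ C₁ * ‖x - y‖ / (dist z x / 2) ^ n := by
  set r := ‖x - y‖ with hrdef
  set d := dist z x with hd
  have hd0 : 0 < d := lt_trans (by positivity) h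
  have hxz : ‖x - z‖ = d := by rw [hd, dist_eq_norm, norm_sub_rev]
  have hseg : ∀ w ∈ segment ℝ (x - z) (y - z), d / 2 ≤ ‖w‖ := by
    intro w hw
    rw [segment_eq_image'] at hw
    obtain ⟨t, ht, rfl⟩ := hw
    have h1 := norm_sub_norm_le (x - z) ((x - z) + t • ((y - z) - (x - z)))
    have h2 : (x - z) - ((x - z) + t • ((y - z) - (x - z))) = -(t • (y - x)) := by
      rw [show (y - z) - (x - z) = y - x from by abel]; abel
    rw [h2, norm_neg, norm_smul, Real.norm_eq_abs, hxz] at h1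
    have h3 : |t| * ‖y - x‖ ≤ r := by
      have : ‖y - x‖ = r := by rw [hrdef, norm_sub_rev]
      rw [this]
      have h4 : |t| ≤ 1 := abs_le.2 ⟨by linarith [ht.1], ht.2⟩
      nlinarith
    linarith
  have hsub : ∀ w ∈ segment ℝ (x - z) (y - z), w ∈ ({0}ᶜ : Set (EuclideanSpace ℝ (Fin n))) := by
    intro w hw
    have := hseg w hw
    simp only [mem_compl_iff, mem_singleton_iff]
    intro h0
    rw [h0, norm_zero] at this
    linarith
  have hder : ∀ w ∈ segment ℝ (x - z) (y - z),
      HasFDerivWithinAt K (fderiv ℝ K w) (segment ℝ (x - z) (y - z)) w := by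
    intro w hw
    exact (((hK_diff.contDiffAt
      (isOpen_compl_singleton.mem_nhds (hsub w hw))).differentiableAt
        one_ne_zero).hasFDerivAt).hasFDerivWithinAt
  have hbound : ∀ w ∈ segment ℝ (x - z) (y - z), ‖fderiv ℝ K w‖ ≤ C₁ / (d / 2) ^ n := by
    intro w hw
    have hw0 : w ≠ 0 := hsub w hw
    have h1 := hK_grad w hw0
    have h2 : ‖w‖ ^ (-(n : ℝ)) ≤ (d / 2) ^ (-(n : ℝ)) :=
      Real.rpow_le_rpow_of_nonpos (by positivity) (hseg w hw)
        (neg_nonpos.2 (Nat.cast_nonneg n))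
    have h3 : (d / 2 : ℝ) ^ (-(n : ℝ)) = ((d / 2) ^ n)⁻¹ := by
      rw [Real.rpow_neg (by positivity), Real.rpow_natCast]
    calc ‖fderiv ℝ K w‖ ≤ C₁ * ‖w‖ ^ (-(n : ℝ)) := h1
      _ ≤ C₁ * ((d / 2) ^ n)⁻¹ := by rw [← h3]; exact mul_le_mul_of_nonneg_left h2 hC₁
      _ = C₁ / (d / 2) ^ n := (div_eq_mul_inv _ _).symm
  have hmain := Convex.norm_image_sub_le_of_norm_hasFDerivWithin_le hder hbound
    (convex_segment _ _) (left_mem_segment ℝ _ _) (right_mem_segment ℝ _ _)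
  calc |K (x - z) - K (y - z)| = ‖K (y - z) - K (x - z)‖ := by
        rw [Real.norm_eq_abs, abs_sub_comm]
    _ ≤ C₁ / (d / 2) ^ n * ‖(y - z) - (x - z)‖ := hmain
    _ = C₁ * r / (d / 2) ^ n := by
        rw [show (y - z) - (x - z) = y - x from by abel, norm_sub_rev]; ring

lemma max_bound {n : ℕ} (hn : 1 ≤ n) (ν : Measure (EuclideanSpace ℝ (Fin n)))
    (g : EuclideanSpace ℝ (Fin n) → ℝ) (x : EuclideanSpace ℝ (Fin n))
    {ρ : ℝ} (hρ : 0 < ρ) :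
    (∫⁻ z in closedBall x ρ, ENNReal.ofReal |g z| ∂ν)
      ≤ ENNReal.ofReal (ρ ^ (n - 1)) * radialMax ν g x := by
  set I := ∫⁻ z in closedBall x ρ, ENNReal.ofReal |g z| ∂ν with hI
  set a := ENNReal.ofReal (ρ ^ (1 - (n : ℝ))) with ha
  have hap : 0 < ρ ^ (1 - (n : ℝ)) := Real.rpow_pos_of_pos hρ _
  have ha0 : a ≠ 0 := (ENNReal.ofReal_pos.2 hap).ne'
  have hat : a ≠ ⊤ := ENNReal.ofReal_ne_top
  have hle : a * I ≤ radialMax ν g x := by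
    rw [radialMax]
    exact le_iSup₂_of_le ρ hρ le_rfl
  have key : (ρ ^ (1 - (n : ℝ)))⁻¹ = ρ ^ (n - 1) := by
    rw [← Real.rpow_natCast ρ (n - 1), ← Real.rpow_neg hρ.le]
    congr 1
    rw [Nat.cast_sub hn]
    push_cast
    ring
  calc I = a⁻¹ * (a * I) := by rw [← mul_assoc, ENNReal.inv_mul_cancel ha0 hat, one_mul]
    _ ≤ a⁻¹ * radialMax ν g x := mul_le_mul_right hle _
    _ = ENNReal.ofReal (ρ ^ (n - 1)) * radialMax ν g x := by
        rw [ha, ← ENNReal.ofReal_inv_of_pos hap, key]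

lemma scalar_id {n : ℕ} (hn : 2 ≤ n) (j : ℕ) {C₁ r : ℝ} (hr : 0 < r) :
    C₁ * r / ((2 : ℝ) ^ j * r) ^ n * ((2 : ℝ) ^ (j + 2) * r) ^ (n - 1)
      = C₁ * 4 ^ (n - 1) * ((2 : ℝ) ^ j)⁻¹ := by
  obtain ⟨m, rfl⟩ : ∃ m, n = m + 2 := ⟨n - 2, by omega⟩
  rw [show m + 2 - 1 = m + 1 by omega]
  have h2 : ((2 : ℝ) ^ j * r) ^ (m + 2) ≠ 0 := by positivity
  have h3 : (2 : ℝ) ^ j ≠ 0 := by positivity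
  field_simp
  ring

/-- For `K ∈ 𝒦` with gradient constant `C₁`, a finite measure `ν`,
`g ∈ L¹(ν)` and `x ≠ y` with `r = |x - y|`:
`∫_{ℝⁿ∖B(x,2r)} |K(x-z) - K(y-z)| |g(z)| dν(z) ≤ 4ⁿ C₁ M_ν g(x)`. -/
theorem statement11 (n : ℕ) (hn : 2 ≤ n)
    (K : EuclideanSpace ℝ (Fin n) → ℝ) (C₀ C₁ : ℝ)
    (hK_diff : ContDiffOn ℝ 1 K {0}ᶜ)
    (hK_anti : ∀ x : EuclideanSpace ℝ (Fin n), x ≠ 0 → K (-x) = -K x)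
    (hK_size : ∀ x : EuclideanSpace ℝ (Fin n), x ≠ 0 →
      |K x| ≤ C₀ * ‖x‖ ^ (-((n : ℝ) - 1)))
    (hK_grad : ∀ x : EuclideanSpace ℝ (Fin n), x ≠ 0 →
      ‖fderiv ℝ K x‖ ≤ C₁ * ‖x‖ ^ (-(n : ℝ)))
    (ν : Measure (EuclideanSpace ℝ (Fin n))) [IsFiniteMeasure ν]
    (g : EuclideanSpace ℝ (Fin n) → ℝ) (hg : Integrable g ν)
    (x y : EuclideanSpace ℝ (Fin n)) (hxy : x ≠ y) :
    ∫⁻ z in (closedBall x (2 * ‖x - y‖))ᶜ,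
        ENNReal.ofReal (|K (x - z) - K (y - z)| * |g z|) ∂ν
      ≤ ENNReal.ofReal (4 ^ n * C₁) * radialMax ν g x := by
  have hxy0 : x - y ≠ 0 := sub_ne_zero.2 hxy
  set r := ‖x - y‖ with hrdef
  have hr : 0 < r := norm_pos_iff.2 hxy0
  have hC₁ : 0 ≤ C₁ := by
    have h1 := hK_grad (x - y) hxy0
    have h2 : 0 < ‖x - y‖ ^ (-(n : ℝ)) := Real.rpow_pos_of_pos hr _
    nlinarith [norm_nonneg (fderiv ℝ K (x - y))]
  set M := radialMax ν g x with hM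
  set s : ℕ → Set (EuclideanSpace ℝ (Fin n)) := fun j =>
    closedBall x (2 ^ (j + 2) * r) \ closedBall x (2 ^ (j + 1) * r) with hs
  -- cover
  have hcover : (closedBall x (2 * r))ᶜ ⊆ ⋃ j, s j := by
    intro z hz
    simp only [mem_compl_iff, mem_closedBall, not_le] at hz
    have hex : ∃ k, dist z x ≤ 2 ^ k * r := by
      obtain ⟨k, hk⟩ := pow_unbounded_of_one_lt (dist z x / r) (one_lt_two (α := ℝ))
      exact ⟨k, le_of_lt (by rwa [div_lt_iff₀ hr] at hk)⟩
    set k := Nat.find hex with hkdef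
    have hk1 : dist z x ≤ 2 ^ k * r := Nat.find_spec hex
    have hk2 : 2 ≤ k := by
      by_contra hcon
      push_neg at hcon
      have h2k : (2 : ℝ) ^ k ≤ 2 := by
        calc (2 : ℝ) ^ k ≤ 2 ^ 1 := by
              apply pow_le_pow_right₀ (by norm_num); omega
          _ = 2 := pow_one 2
      nlinarith
    refine mem_iUnion.2 ⟨k - 2, ?_, ?_⟩
    · rw [mem_closedBall]
      have : k - 2 + 2 = k := by omega
      rw [this]; exact hk1
    · rw [mem_closedBall, not_le]
      have hmin := Nat.find_min hex (show k - 1 < k by omega)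
      push_neg at hmin
      have : k - 2 + 1 = k - 1 := by omega
      rw [this]; exact hmin
  have hannM : ∀ j : ℕ, MeasurableSet (s j) :=
    fun j => measurableSet_closedBall.diff measurableSet_closedBall
  -- per-annulus bound
  have hann : ∀ j : ℕ,
      (∫⁻ z in s j, ENNReal.ofReal (|K (x - z) - K (y - z)| * |g z|) ∂ν)
        ≤ ENNReal.ofReal (C₁ * 4 ^ (n - 1)) * 2⁻¹ ^ j * M := by
    intro j
    have h2j : (0 : ℝ) < 2 ^ j * r := by positivity
    have hcnn : (0 : ℝ) ≤ C₁ * r / (2 ^ j * r) ^ n := by positivity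
    have step1 : ∀ z ∈ s j, ENNReal.ofReal (|K (x - z) - K (y - z)| * |g z|)
        ≤ ENNReal.ofReal (C₁ * r / (2 ^ j * r) ^ n * |g z|) := by
      intro z hz
      obtain ⟨hz1, hz2⟩ := hz
      rw [mem_closedBall, not_le] at hz2
      have h21 : (2 : ℝ) ≤ 2 ^ (j + 1) := by
        calc (2 : ℝ) = 2 ^ 1 := (pow_one 2).symm
          _ ≤ 2 ^ (j + 1) := pow_le_pow_right₀ (by norm_num) (by omega)
      have hd2 : 2 * r < dist z x := lt_of_le_of_lt (by nlinarith) hz2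
      have hb := mvt_bound hK_diff hK_grad hC₁ hd2 hr
      have hmono : C₁ * r / (dist z x / 2) ^ n ≤ C₁ * r / (2 ^ j * r) ^ n := by
        have hhalf : 2 ^ j * r ≤ dist z x / 2 := by
          rw [le_div_iff₀ (by norm_num : (0:ℝ) < 2)]
          calc 2 ^ j * r * 2 = 2 ^ (j + 1) * r := by ring
            _ ≤ dist z x := hz2.le
        gcongr
      exact ENNReal.ofReal_le_ofReal
        (mul_le_mul_of_nonneg_right (hb.trans hmono) (abs_nonneg _))
    have hsb : s j ⊆ closedBall x (2 ^ (j + 2) * r) := diff_subset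
    calc (∫⁻ z in s j, ENNReal.ofReal (|K (x - z) - K (y - z)| * |g z|) ∂ν)
        ≤ ∫⁻ z in s j, ENNReal.ofReal (C₁ * r / (2 ^ j * r) ^ n * |g z|) ∂ν :=
          setLIntegral_mono' (hannM j) step1
      _ = ENNReal.ofReal (C₁ * r / (2 ^ j * r) ^ n)
            * ∫⁻ z in s j, ENNReal.ofReal |g z| ∂ν := by
          simp_rw [ENNReal.ofReal_mul hcnn]
          exact lintegral_const_mul' _ _ ENNReal.ofReal_ne_top
      _ ≤ ENNReal.ofReal (C₁ * r / (2 ^ j * r) ^ n)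
            * (ENNReal.ofReal ((2 ^ (j + 2) * r) ^ (n - 1)) * M) := by
          gcongr
          exact (lintegral_mono_set hsb).trans
            (max_bound (by omega) ν g x (by positivity))
      _ = ENNReal.ofReal (C₁ * r / (2 ^ j * r) ^ n * (2 ^ (j + 2) * r) ^ (n - 1)) * M := by
          rw [← mul_assoc, ← ENNReal.ofReal_mul hcnn]
      _ = ENNReal.ofReal (C₁ * 4 ^ (n - 1) * ((2 : ℝ) ^ j)⁻¹) * M := by
          rw [scalar_id hn j hr]
      _ = ENNReal.ofReal (C₁ * 4 ^ (n - 1)) * 2⁻¹ ^ j * M := by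
          rw [ENNReal.ofReal_mul (by positivity)]
          congr 1
          rw [← inv_pow, ENNReal.ofReal_pow (by norm_num),
            ENNReal.ofReal_inv_of_pos (by norm_num : (0:ℝ) < 2)]
          norm_num
  -- sum up
  calc ∫⁻ z in (closedBall x (2 * r))ᶜ,
        ENNReal.ofReal (|K (x - z) - K (y - z)| * |g z|) ∂ν
      ≤ ∫⁻ z in ⋃ j, s j, ENNReal.ofReal (|K (x - z) - K (y - z)| * |g z|) ∂ν :=
        lintegral_mono_set hcover
    _ ≤ ∑' j, ∫⁻ z in s j, ENNReal.ofReal (|K (x - z) - K (y - z)| * |g z|) ∂ν :=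
        lintegral_iUnion_le _ _
    _ ≤ ∑' j : ℕ, ENNReal.ofReal (C₁ * 4 ^ (n - 1)) * 2⁻¹ ^ j * M :=
        ENNReal.tsum_le_tsum hann
    _ = ENNReal.ofReal (C₁ * 4 ^ (n - 1)) * (∑' j : ℕ, (2⁻¹ : ℝ≥0∞) ^ j) * M := by
        rw [ENNReal.tsum_mul_right, ENNReal.tsum_mul_left]
    _ = ENNReal.ofReal (C₁ * 4 ^ (n - 1)) * 2 * M := by
        rw [ENNReal.tsum_geometric]
        norm_num
    _ ≤ ENNReal.ofReal (4 ^ n * C₁) * M := by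
        gcongr
        rw [show (2 : ℝ≥0∞) = ENNReal.ofReal 2 by norm_num,
          ← ENNReal.ofReal_mul (by positivity)]
        apply ENNReal.ofReal_le_ofReal
        have h4 : (4 : ℝ) ^ n = 4 ^ (n - 1) * 4 := by
          rw [← pow_succ]; congr 1; omega
        nlinarith [pow_nonneg (by norm_num : (0:ℝ) ≤ 4) (n - 1)]
end
end
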